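/- Let f(x) = 1{θᵀx > t} for a threshold t ≥ 0 and a unit vector θ ∈ ℝ^d. Then for d ≥ 2, the mean dimension of f with respect to X ~ N(0, I_d) satisfies ν(f) ≤ (‖θ‖₁ / (Φ(t)Φ(−t)√(2π))) · (√2 + 2√(log(d/‖θ‖₁))), where ‖θ‖₁ = Σ_{j=1}^d |θ_j|. -/

import Mathlib

open MeasureTheory ProbabilityTheory Real Filter

noncomputable section

/-- Standard Gaussian measure `N(0, I_d)` on `ℝ^d`. -/
def stdGaussian (d : ℕ) : Measure (Fin d → ℝ) :=
  Measure.pi fun _ => gaussianReal 0 1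

/-- Sobol' total index `τ̄²_j(f) = (1/2)·E[(f(X) − f(X_{−j}:Z_j))²]`. -/
def sobolTau (d : ℕ) (f : (Fin d → ℝ) → ℝ) (j : Fin d) : ℝ :=
  (1 / 2) * ∫ p : (Fin d → ℝ) × (Fin d → ℝ),
    (f p.1 - f (Function.update p.1 j (p.2 j))) ^ 2
      ∂((stdGaussian d).prod (stdGaussian d))

/-- Mean dimension `ν(f) = (Σ_j τ̄²_j(f)) / Var(f(X))`. -/
def meanDim (d : ℕ) (f : (Fin d → ℝ) → ℝ) : ℝ :=
  (∑ j, sobolTau d f j) / variance f (stdGaussian d)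

/-- Gaussian fractional absolute moment `M_η = 2^{η/2} Γ((η+1)/2) / √π`. -/
def Mmom (η : ℝ) : ℝ := 2 ^ (η / 2) / Real.sqrt π * Real.Gamma ((η + 1) / 2)

/-- Standard normal CDF `Φ`. -/
def Phi (t : ℝ) : ℝ := ((gaussianReal 0 1) (Set.Iic t)).toReal

/-- Standard normal density `φ`. -/
def gpdf (x : ℝ) : ℝ := Real.exp (-x ^ 2 / 2) / Real.sqrt (2 * π)

namespace Stmt5Aux

abbrev γ1 : Measure ℝ := gaussianReal 0 1

instance stdGaussian_prob (n : ℕ) : IsProbabilityMeasure (stdGaussian n) := by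
  unfold _root_.stdGaussian; infer_instance

/-! ### Elementary integrals -/

lemma integral_Ioi_mul_exp {b : ℝ} (hb : 0 < b) :
    ∫ x in Set.Ioi (0:ℝ), x * Real.exp (-b * x ^ 2) = (2 * b)⁻¹ := by
  have A : ∀ x : ℝ, HasDerivAt (fun y : ℝ => -(2 * b)⁻¹ * Real.exp (-b * y ^ 2))
      (x * Real.exp (-b * x ^ 2)) x := by
    intro x
    convert (((hasDerivAt_pow 2 x).const_mul (-b)).exp.const_mul (-(2 * b)⁻¹)) using 1
    case e'_9 =>
      field_simp
      ring
    all_goals rfl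
  have B : Tendsto (fun y : ℝ => -(2 * b)⁻¹ * Real.exp (-b * y ^ 2)) atTop
      (nhds (-(2 * b)⁻¹ * 0)) := by
    refine Tendsto.const_mul _ ?_
    refine Real.tendsto_exp_atBot.comp ?_
    exact (tendsto_pow_atTop two_ne_zero).const_mul_atTop_of_neg (neg_lt_zero.2 hb)
  have key := integral_Ioi_of_hasDerivAt_of_tendsto' (a := 0) (fun x _ => A x)
    (integrable_mul_exp_neg_mul_sq hb).integrableOn B
  rw [key]
  norm_num

lemma integral_abs_mul_exp {b : ℝ} (hb : 0 < b) :
    ∫ x : ℝ, |x| * Real.exp (-b * x ^ 2) = b⁻¹ := by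
  have hint : Integrable (fun x : ℝ => |x| * Real.exp (-b * x ^ 2)) := by
    have := (integrable_mul_exp_neg_mul_sq hb).abs
    refine this.congr (Eventually.of_forall fun x => ?_)
    show |x * rexp (-b * x ^ 2)| = |x| * rexp (-b * x ^ 2)
    rw [abs_mul, abs_of_pos (Real.exp_pos _)]
  rw [← integral_add_compl measurableSet_Iic hint, Set.compl_Iic]
  have hneg := integral_comp_neg_Ioi (0:ℝ) (fun x => |x| * Real.exp (-b * x ^ 2))
  rw [neg_zero] at hneg
  have h1 : ∫ x in Set.Iic (0:ℝ), |x| * Real.exp (-b * x ^ 2)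
      = ∫ x in Set.Ioi (0:ℝ), x * Real.exp (-b * x ^ 2) := by
    rw [← hneg]
    refine setIntegral_congr_fun measurableSet_Ioi fun x hx => ?_
    show |(-x)| * rexp (-b * (-x) ^ 2) = x * rexp (-b * x ^ 2)
    rw [abs_neg, abs_of_pos (by simpa using hx), neg_sq]
  have h2 : ∫ x in Set.Ioi (0:ℝ), |x| * Real.exp (-b * x ^ 2)
      = ∫ x in Set.Ioi (0:ℝ), x * Real.exp (-b * x ^ 2) := by
    refine setIntegral_congr_fun measurableSet_Ioi fun x hx => ?_
    show |x| * rexp (-b * x ^ 2) = x * rexp (-b * x ^ 2)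
    rw [abs_of_pos (by simpa using hx)]
  rw [h1, h2, integral_Ioi_mul_exp hb, ← two_mul, mul_inv, ← mul_assoc,
    mul_inv_cancel₀ (two_ne_zero), one_mul]

/-! ### Rotation invariance of the 2D standard Gaussian -/

lemma prod_gauss_withDensity :
    γ1.prod γ1 = ((volume : Measure ℝ).prod volume).withDensity
      (fun p => gaussianPDF 0 1 p.1 * gaussianPDF 0 1 p.2) := by
  refine Measure.prod_eq fun s t hs ht => ?_
  rw [withDensity_apply _ (hs.prod ht), ← Measure.prod_restrict,
    lintegral_prod_mul (measurable_gaussianPDF 0 1).aemeasurable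
      (measurable_gaussianPDF 0 1).aemeasurable,
    gaussianReal_apply 0 one_ne_zero s, gaussianReal_apply 0 one_ne_zero t]

/-- Rotation of the plane as a measurable equivalence. -/
def rotE (a b : ℝ) (h : a ^ 2 + b ^ 2 = 1) : (ℝ × ℝ) ≃ᵐ (ℝ × ℝ) where
  toEquiv :=
    { toFun := fun p => (a * p.1 + b * p.2, -b * p.1 + a * p.2)
      invFun := fun q => (a * q.1 - b * q.2, b * q.1 + a * q.2)
      left_inv := fun p => by
        obtain ⟨x, y⟩ := p
        dsimp only
        rw [Prod.mk.injEq]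
        constructor
        · linear_combination x * h
        · linear_combination y * h
      right_inv := fun q => by
        obtain ⟨x, y⟩ := q
        dsimp only
        rw [Prod.mk.injEq]
        constructor
        · linear_combination x * h
        · linear_combination y * h }
  measurable_toFun := ((measurable_fst.const_mul a).add (measurable_snd.const_mul b)).prodMk
      ((measurable_fst.const_mul (-b)).add (measurable_snd.const_mul a))
  measurable_invFun := ((measurable_fst.const_mul a).sub (measurable_snd.const_mul b)).prodMk
      ((measurable_fst.const_mul b).add (measurable_snd.const_mul a))

lemma rotE_apply (a b : ℝ) (h : a ^ 2 + b ^ 2 = 1) (p : ℝ × ℝ) :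
    rotE a b h p = (a * p.1 + b * p.2, -b * p.1 + a * p.2) := rfl

lemma rotE_map_volume (a b : ℝ) (h : a ^ 2 + b ^ 2 = 1) :
    Measure.map (rotE a b h) ((volume : Measure ℝ).prod volume)
      = (volume : Measure ℝ).prod volume := by
  set L := Matrix.toLin (Module.Basis.finTwoProd ℝ) (Module.Basis.finTwoProd ℝ) !![a, b; -b, a] with hL
  have hdet : LinearMap.det L = 1 := by
    rw [hL, LinearMap.det_toLin, Matrix.det_fin_two_of]
    nlinarith [h]
  have hcoe : ⇑(rotE a b h) = ⇑L := by
    funext p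
    rw [hL, Matrix.toLin_finTwoProd_apply, rotE_apply]
  rw [hcoe, Measure.map_linearMap_addHaar_eq_smul_addHaar _ (by rw [hdet]; norm_num), hdet]
  norm_num

lemma map_equiv_withDensity {α β : Type*} [MeasurableSpace α] [MeasurableSpace β]
    (e : α ≃ᵐ β) (μ : Measure α) {h : β → ENNReal} (hh : Measurable h) :
    Measure.map e (μ.withDensity (fun x => h (e x))) = (Measure.map e μ).withDensity h := by
  ext s hs
  rw [Measure.map_apply e.measurable hs, withDensity_apply _ (e.measurable hs),
    withDensity_apply _ hs, setLIntegral_map hs hh e.measurable]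

lemma gaussianPDFReal_mul' (u v : ℝ) :
    gaussianPDFReal 0 1 u * gaussianPDFReal 0 1 v
      = (Real.sqrt (2 * π * 1))⁻¹ * (Real.sqrt (2 * π * 1))⁻¹
        * Real.exp (-(u ^ 2 + v ^ 2) / 2) := by
  rw [gaussianPDFReal_def]
  simp only [NNReal.coe_one, sub_zero]
  rw [show (√(2 * π * 1))⁻¹ * rexp (-u ^ 2 / (2*1)) * ((√(2 * π * 1))⁻¹ * rexp (-v ^ 2 / (2*1)))
    = (√(2 * π * 1))⁻¹ * (√(2 * π * 1))⁻¹ * (rexp (-u ^ 2 / (2*1)) * rexp (-v ^ 2 / (2*1))) by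
      ring, ← Real.exp_add]
  congr 1
  ring

lemma gaussianPDF_rot_invariant (a b : ℝ) (h : a ^ 2 + b ^ 2 = 1) (p : ℝ × ℝ) :
    gaussianPDF 0 1 (a * p.1 + b * p.2) * gaussianPDF 0 1 (-b * p.1 + a * p.2)
      = gaussianPDF 0 1 p.1 * gaussianPDF 0 1 p.2 := by
  obtain ⟨x, y⟩ := p
  dsimp only
  show ENNReal.ofReal _ * ENNReal.ofReal _ = ENNReal.ofReal _ * ENNReal.ofReal _
  rw [← ENNReal.ofReal_mul (gaussianPDFReal_nonneg _ _ _),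
    ← ENNReal.ofReal_mul (gaussianPDFReal_nonneg _ _ _), gaussianPDFReal_mul',
    gaussianPDFReal_mul']
  have harg : (a * x + b * y) ^ 2 + (-b * x + a * y) ^ 2 = x ^ 2 + y ^ 2 := by
    nlinarith [h]
  rw [harg]

lemma map_rot (a b : ℝ) (h : a ^ 2 + b ^ 2 = 1) :
    Measure.map (fun p : ℝ × ℝ => a * p.1 + b * p.2) (γ1.prod γ1) = γ1 := by
  have hH : Measurable (fun p : ℝ × ℝ => gaussianPDF 0 1 p.1 * gaussianPDF 0 1 p.2) :=
    ((measurable_gaussianPDF 0 1).comp measurable_fst).mul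
      ((measurable_gaussianPDF 0 1).comp measurable_snd)
  have hinv : Measure.map (rotE a b h) (γ1.prod γ1) = γ1.prod γ1 := by
    rw [prod_gauss_withDensity]
    have key : (fun p : ℝ × ℝ =>
        (fun q : ℝ × ℝ => gaussianPDF 0 1 q.1 * gaussianPDF 0 1 q.2) (rotE a b h p))
        = fun p : ℝ × ℝ => gaussianPDF 0 1 p.1 * gaussianPDF 0 1 p.2 := by
      funext p
      exact gaussianPDF_rot_invariant a b h p
    conv_lhs => rw [← key]
    rw [map_equiv_withDensity (rotE a b h) _ hH, rotE_map_volume]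
  have hcomp : (fun p : ℝ × ℝ => a * p.1 + b * p.2) = Prod.fst ∘ (rotE a b h) := rfl
  rw [hcomp, ← Measure.map_map measurable_fst (rotE a b h).measurable, hinv,
    Measure.map_fst_prod]
  simp

lemma map_lin2 (c₁ c₂ : ℝ) :
    Measure.map (fun p : ℝ × ℝ => c₁ * p.1 + c₂ * p.2) (γ1.prod γ1)
      = gaussianReal 0 (c₁ ^ 2 + c₂ ^ 2).toNNReal := by
  rcases eq_or_ne (c₁ ^ 2 + c₂ ^ 2) 0 with h0 | h0
  · have h1 : c₁ = 0 := by nlinarith [sq_nonneg c₁, sq_nonneg c₂]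
    have h2 : c₂ = 0 := by nlinarith [sq_nonneg c₁, sq_nonneg c₂]
    subst h1; subst h2
    rw [show (fun p : ℝ × ℝ => (0:ℝ) * p.1 + (0:ℝ) * p.2) = (fun _ : ℝ × ℝ => (0:ℝ)) from
      funext fun p => by ring, Measure.map_const]
    norm_num
  · have hpos : 0 < c₁ ^ 2 + c₂ ^ 2 :=
      lt_of_le_of_ne (by positivity) (Ne.symm h0)
    set ρ := Real.sqrt (c₁ ^ 2 + c₂ ^ 2) with hρdef
    have hρ : 0 < ρ := Real.sqrt_pos.2 hpos
    have hρsq : ρ ^ 2 = c₁ ^ 2 + c₂ ^ 2 := Real.sq_sqrt hpos.le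
    have hab : (c₁ / ρ) ^ 2 + (c₂ / ρ) ^ 2 = 1 := by
      field_simp
      linarith [hρsq]
    have hrotm : Measurable (fun p : ℝ × ℝ => (c₁ / ρ) * p.1 + (c₂ / ρ) * p.2) :=
      (measurable_fst.const_mul _).add (measurable_snd.const_mul _)
    have hcomp : (fun p : ℝ × ℝ => c₁ * p.1 + c₂ * p.2)
        = (fun x : ℝ => ρ * x) ∘ (fun p : ℝ × ℝ => (c₁ / ρ) * p.1 + (c₂ / ρ) * p.2) := by
      funext p
      simp only [Function.comp_apply]
      field_simp
    have hm1 : Measurable (fun x : ℝ => ρ * x) := measurable_id.const_mul ρ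
    rw [hcomp, ← Measure.map_map hm1 hrotm, map_rot _ _ hab,
      gaussianReal_map_const_mul ρ, mul_zero]
    congr 1
    ext
    simp only [NNReal.coe_mul, NNReal.coe_mk, NNReal.coe_one, mul_one]
    rw [Real.coe_toNNReal _ hpos.le, hρsq]

/-! ### Law of a linear combination of iid standard Gaussians -/

lemma prod_map_right (g : ℝ → ℝ) (hg : Measurable g) :
    γ1.prod (Measure.map g γ1) = Measure.map (Prod.map id g) (γ1.prod γ1) := by
  rw [← Measure.map_prod_map _ _ measurable_id hg, Measure.map_id]

lemma map_sum_gauss : ∀ (n : ℕ) (c : Fin n → ℝ),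
    Measure.map (fun x : Fin n → ℝ => ∑ i, c i * x i) (stdGaussian n)
      = gaussianReal 0 (∑ i, c i ^ 2).toNNReal := by
  intro n
  induction n with
  | zero =>
    intro c
    rw [show (fun x : Fin 0 → ℝ => ∑ i, c i * x i) = fun _ => (0:ℝ) from
      funext fun x => by simp, Measure.map_const]
    simp only [Fin.sum_univ_zero, Real.toNNReal_zero, gaussianReal_zero_var, measure_univ,
      one_smul]
  | succ n ih =>
    intro c
    set e := MeasurableEquiv.piFinSuccAbove (fun _ : Fin (n + 1) => ℝ) 0 with he
    have mp : MeasurePreserving e (stdGaussian (n + 1)) (γ1.prod (stdGaussian n)) :=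
      measurePreserving_piFinSuccAbove (fun _ : Fin (n + 1) => γ1) 0
    set S : (Fin n → ℝ) → ℝ := fun y => ∑ i, c ((0:Fin (n+1)).succAbove i) * y i with hS
    have hSm : Measurable S := by
      apply Finset.measurable_sum
      intro i _
      exact (measurable_pi_apply i).const_mul _
    have hg2m : Measurable (fun q : ℝ × ℝ => c 0 * q.1 + q.2) :=
      (measurable_fst.const_mul _).add measurable_snd
    have hsum : (fun x : Fin (n + 1) → ℝ => ∑ i, c i * x i)
        = (fun q : ℝ × ℝ => c 0 * q.1 + q.2) ∘ ((Prod.map id S) ∘ e) := by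
      funext x
      simp only [Function.comp_apply, Prod.map_apply, id_eq]
      rw [Fin.sum_univ_succAbove (fun k => c k * x k) 0]
      rfl
    rw [hsum, ← Measure.map_map hg2m (measurable_id.prodMap hSm |>.comp e.measurable),
      ← Measure.map_map (measurable_id.prodMap hSm) e.measurable, mp.map_eq,
      ← Measure.map_prod_map _ _ measurable_id hSm, Measure.map_id, ih]
    set w : ℝ := ∑ i, c ((0:Fin (n+1)).succAbove i) ^ 2 with hw
    have hwnn : 0 ≤ w := Finset.sum_nonneg fun i _ => sq_nonneg _
    have hgw : gaussianReal 0 w.toNNReal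
        = Measure.map (fun x : ℝ => Real.sqrt w * x) γ1 := by
      rw [gaussianReal_map_const_mul, mul_zero]
      congr 1
      ext
      simp only [NNReal.coe_mul, NNReal.coe_mk, NNReal.coe_one, mul_one]
      rw [Real.coe_toNNReal _ hwnn, Real.sq_sqrt hwnn]
    have hmulm : Measurable (fun x : ℝ => Real.sqrt w * x) := measurable_id.const_mul _
    rw [hgw, prod_map_right (fun x : ℝ => Real.sqrt w * x) hmulm,
      Measure.map_map hg2m (measurable_id.prodMap hmulm),
      show ((fun q : ℝ × ℝ => c 0 * q.1 + q.2) ∘ (Prod.map id (fun x : ℝ => Real.sqrt w * x)))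
        = fun q : ℝ × ℝ => c 0 * q.1 + Real.sqrt w * q.2 from funext fun q => by
          simp [Prod.map_apply], map_lin2]
    congr 1
    rw [Real.sq_sqrt hwnn, hw, Fin.sum_univ_succAbove (fun i => c i ^ 2) 0]

/-! ### Gaussian measure estimates -/

lemma gauss_Icc_le {v : NNReal} (hv : v ≠ 0) (α β : ℝ) :
    gaussianReal 0 v (Set.Icc α β)
      ≤ ENNReal.ofReal ((β - α) * (Real.sqrt (2 * π * v))⁻¹) := by
  rw [gaussianReal_apply 0 hv]
  have hC : (0:ℝ) ≤ (Real.sqrt (2 * π * v))⁻¹ := by positivity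
  calc ∫⁻ x in Set.Icc α β, gaussianPDF 0 v x
      ≤ ∫⁻ _x in Set.Icc α β, ENNReal.ofReal ((Real.sqrt (2 * π * v))⁻¹) := by
        refine setLIntegral_mono measurable_const fun x _ => ?_
        unfold gaussianPDF
        refine ENNReal.ofReal_le_ofReal ?_
        rw [gaussianPDFReal_def]
        simp only [sub_zero]
        calc (√(2 * π * v))⁻¹ * rexp (-x ^ 2 / (2 * v))
            ≤ (√(2 * π * v))⁻¹ * 1 := by
              refine mul_le_mul_of_nonneg_left ?_ hC
              refine Real.exp_le_one_iff.2 ?_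
              have hvpos : (0:ℝ) < (v:ℝ) := by
                exact_mod_cast pos_iff_ne_zero.2 hv
              exact div_nonpos_of_nonpos_of_nonneg (neg_nonpos.2 (sq_nonneg x)) (by positivity)
          _ = (√(2 * π * v))⁻¹ := mul_one _
    _ = ENNReal.ofReal ((Real.sqrt (2 * π * v))⁻¹) * volume (Set.Icc α β) :=
        setLIntegral_const _ _
    _ ≤ ENNReal.ofReal ((β - α) * (Real.sqrt (2 * π * v))⁻¹) := by
        rw [Real.volume_Icc, ← ENNReal.ofReal_mul hC, mul_comm]


/-! ### Facts about the standard normal CDF -/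

lemma gauss_singleton (t : ℝ) : γ1 {t} = 0 :=
  gaussianReal_absolutelyContinuous 0 one_ne_zero (by simp)

lemma gauss_map_neg : Measure.map (fun x : ℝ => -x) γ1 = γ1 := by
  have hneg : (fun x : ℝ => -x) = ((-1 : ℝ) * ·) := funext fun x => by ring
  rw [hneg, gaussianReal_map_const_mul, mul_zero]
  congr 1
  ext
  norm_num

lemma gauss_Ioi_eq_Iic_neg (t : ℝ) : γ1 (Set.Ioi t) = γ1 (Set.Iic (-t)) := by
  have h1 : γ1 (Set.Iic (-t)) = Measure.map (fun x : ℝ => -x) γ1 (Set.Iic (-t)) := by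
    rw [gauss_map_neg]
  rw [h1, Measure.map_apply measurable_neg measurableSet_Iic]
  have hpre : (fun x : ℝ => -x) ⁻¹' Set.Iic (-t) = Set.Ici t := by
    ext x
    simp
  rw [hpre, ← Set.Ioi_union_left]
  refine le_antisymm (measure_mono Set.subset_union_left) ?_
  calc γ1 (Set.Ioi t ∪ {t}) ≤ γ1 (Set.Ioi t) + γ1 {t} := measure_union_le _ _
    _ = γ1 (Set.Ioi t) := by rw [gauss_singleton, add_zero]

lemma Phi_pos (u : ℝ) : 0 < Phi u := by
  have hne : γ1 (Set.Iic u) ≠ 0 := by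
    intro h0
    have hsub : γ1 (Set.Icc (u - 1) u) = 0 :=
      measure_mono_null (Set.Icc_subset_Iic_self) h0
    set mm : ℝ := (Real.sqrt (2 * π * 1))⁻¹ * Real.exp (-(|u| + 1) ^ 2 / 2) with hmm
    have hmpos : 0 < mm := by positivity
    have hlow : ENNReal.ofReal mm * volume (Set.Icc (u - 1) u) ≤ γ1 (Set.Icc (u - 1) u) := by
      rw [gaussianReal_apply 0 one_ne_zero, ← setLIntegral_const]
      refine setLIntegral_mono (measurable_gaussianPDF 0 1) fun x hx => ?_
      unfold gaussianPDF
      refine ENNReal.ofReal_le_ofReal ?_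
      rw [gaussianPDFReal_def]
      simp only [NNReal.coe_one, sub_zero]
      rw [hmm]
      refine mul_le_mul_of_nonneg_left ?_ (by positivity)
      refine Real.exp_le_exp.2 ?_
      have hx1 : u - 1 ≤ x := hx.1
      have hx2 : x ≤ u := hx.2
      have hxa : x ^ 2 ≤ (|u| + 1) ^ 2 := by
        refine sq_le_sq' ?_ ?_
        · have := neg_abs_le u
          linarith
        · have := le_abs_self u
          linarith
      rw [mul_one]
      linarith
    rw [hsub] at hlow
    have hvol : volume (Set.Icc (u - 1) u) = 1 := by
      rw [Real.volume_Icc]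
      norm_num
    rw [hvol, mul_one, nonpos_iff_eq_zero, ENNReal.ofReal_eq_zero] at hlow
    linarith
  exact ENNReal.toReal_pos hne (measure_ne_top _ _)

lemma Phi_add_Phi_neg (t : ℝ) : Phi t + Phi (-t) = 1 := by
  have h1 : γ1 (Set.Iic t) + γ1 (Set.Ioi t) = 1 := by
    rw [← measure_union (Set.Iic_disjoint_Ioi le_rfl) measurableSet_Ioi, Set.Iic_union_Ioi,
      measure_univ]
  unfold Phi
  rw [← gauss_Ioi_eq_Iic_neg t, ← ENNReal.toReal_add (measure_ne_top _ _) (measure_ne_top _ _),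
    h1, ENNReal.toReal_one]

/-! ### Variance of the step function -/

lemma variance_eq (d : ℕ) (t : ℝ) (θ : Fin d → ℝ) (hθ : ∑ j, θ j ^ 2 = 1)
    (f : (Fin d → ℝ) → ℝ) (hf : ∀ x, f x = if t < ∑ j, θ j * x j then (1:ℝ) else 0) :
    variance f (stdGaussian d) = Phi t * Phi (-t) := by
  have hWm : Measurable (fun x : Fin d → ℝ => ∑ j, θ j * x j) := by
    apply Finset.measurable_sum
    intro i _
    exact (measurable_pi_apply i).const_mul _
  have hA : MeasurableSet {x : Fin d → ℝ | t < ∑ j, θ j * x j} :=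
    measurableSet_lt measurable_const hWm
  have hfeq : f = Set.indicator {x : Fin d → ℝ | t < ∑ j, θ j * x j} (fun _ => (1:ℝ)) := by
    funext x
    rw [hf, Set.indicator_apply]
    simp only [Set.mem_setOf_eq]
  have hfm : Measurable f := by
    rw [hfeq]
    exact measurable_const.indicator hA
  have hmem : MemLp f 2 (stdGaussian d) := by
    refine MemLp.mono_exponent ?_ le_top
    refine memLp_top_of_bound hfm.aestronglyMeasurable 1 (Eventually.of_forall fun x => ?_)
    rw [hf]
    split_ifs <;> simp
  have hint : ∫ x, f x ∂(stdGaussian d) = Phi (-t) := by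
    rw [hfeq, integral_indicator_const (1:ℝ) hA, smul_eq_mul, mul_one]
    have hlaw : (stdGaussian d) {x : Fin d → ℝ | t < ∑ j, θ j * x j} = γ1 (Set.Ioi t) := by
      have hmap := map_sum_gauss d θ
      rw [hθ, Real.toNNReal_one] at hmap
      show (stdGaussian d) _ = gaussianReal 0 1 (Set.Ioi t)
      rw [← hmap, Measure.map_apply hWm measurableSet_Ioi]
      rfl
    rw [measureReal_def, hlaw, gauss_Ioi_eq_Iic_neg]
    rfl
  have hsq : f ^ 2 = f := by
    funext x
    rw [Pi.pow_apply, hf]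
    split_ifs <;> norm_num
  rw [variance_eq_sub hmem, hsq, hint]
  have hsum := Phi_add_Phi_neg t
  linear_combination (-(Phi (-t))) * hsum


/-- First absolute moment of a centered Gaussian with variance 2. -/
lemma lintegral_abs_gauss2 :
    ∫⁻ y, ENNReal.ofReal |y| ∂(gaussianReal 0 (2:NNReal)) = ENNReal.ofReal (2 / Real.sqrt π) := by
  have h2 : ((2:NNReal)) ≠ 0 := by norm_num
  have hb4 : (0:ℝ) < 4⁻¹ := by norm_num
  have habsint : Integrable (fun y : ℝ => |y| * Real.exp (-(4:ℝ)⁻¹ * y ^ 2)) := by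
    have := (integrable_mul_exp_neg_mul_sq hb4).abs
    refine this.congr (Eventually.of_forall fun x => ?_)
    show |x * rexp (-(4:ℝ)⁻¹ * x ^ 2)| = |x| * rexp (-(4:ℝ)⁻¹ * x ^ 2)
    rw [abs_mul, abs_of_pos (Real.exp_pos _)]
  have hptreal : ∀ y : ℝ, gaussianPDFReal 0 2 y
      = (Real.sqrt (2 * π * 2))⁻¹ * Real.exp (-(4:ℝ)⁻¹ * y ^ 2) := by
    intro y
    rw [gaussianPDFReal_def]
    simp only [sub_zero, NNReal.coe_ofNat]
    rw [show -y ^ 2 / (2 * (2:ℝ)) = -(4:ℝ)⁻¹ * y ^ 2 by ring]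
  have hint : Integrable (fun y : ℝ => gaussianPDFReal 0 2 y * |y|) := by
    have h1 : Integrable (fun y : ℝ =>
        (Real.sqrt (2 * π * 2))⁻¹ * (|y| * Real.exp (-(4:ℝ)⁻¹ * y ^ 2))) :=
      habsint.const_mul _
    refine h1.congr (Eventually.of_forall fun y => ?_)
    show (Real.sqrt (2 * π * 2))⁻¹ * (|y| * rexp (-(4:ℝ)⁻¹ * y ^ 2))
      = gaussianPDFReal 0 2 y * |y|
    rw [hptreal y]
    ring
  rw [gaussianReal_of_var_ne_zero 0 h2,
    lintegral_withDensity_eq_lintegral_mul _ (measurable_gaussianPDF _ _)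
      (by exact measurable_id.abs.ennreal_ofReal)]
  have hcongr : ∀ y : ℝ, (gaussianPDF 0 2 * fun y => ENNReal.ofReal |y|) y
      = ENNReal.ofReal (gaussianPDFReal 0 2 y * |y|) := by
    intro y
    simp only [Pi.mul_apply, gaussianPDF_def]
    rw [← ENNReal.ofReal_mul (gaussianPDFReal_nonneg _ _ _)]
  rw [lintegral_congr hcongr, ← ofReal_integral_eq_lintegral_ofReal hint
    (Eventually.of_forall fun y => mul_nonneg (gaussianPDFReal_nonneg _ _ _) (abs_nonneg _))]
  congr 1
  have hrw : ∀ y : ℝ, gaussianPDFReal 0 2 y * |y|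
      = (Real.sqrt (2 * π * 2))⁻¹ * (|y| * Real.exp (-(4:ℝ)⁻¹ * y ^ 2)) := by
    intro y
    rw [hptreal y]
    ring
  rw [integral_congr_ae (Eventually.of_forall hrw), integral_const_mul,
    integral_abs_mul_exp hb4]
  have hsq : Real.sqrt (2 * π * 2) = 2 * Real.sqrt π := by
    rw [show 2 * π * 2 = 2 ^ 2 * π by ring, Real.sqrt_mul (by positivity),
      Real.sqrt_sq (by norm_num)]
  rw [hsq]
  rw [show ((4:ℝ)⁻¹)⁻¹ = 4 by norm_num]
  rw [div_eq_mul_inv, mul_inv, mul_comm]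
  ring

/-! ### The bound on each Sobol index -/

set_option maxHeartbeats 2000000 in
lemma tau_le {m : ℕ} (t : ℝ) (θ : Fin (m + 1) → ℝ) (hθ : ∑ j, θ j ^ 2 = 1)
    (f : (Fin (m + 1) → ℝ) → ℝ)
    (hf : ∀ x, f x = if t < ∑ j, θ j * x j then (1:ℝ) else 0) (j : Fin (m + 1)) :
    sobolTau (m + 1) f j ≤ |θ j| / Real.sqrt π := by
  have hsπ : 0 < Real.sqrt π := Real.sqrt_pos.2 pi_pos
  set c := θ j with hc
  set S : (Fin (m + 1) → ℝ) → ℝ := fun x => ∑ i, θ (j.succAbove i) * x (j.succAbove i) with hS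
  have hSm : Measurable S := by
    apply Finset.measurable_sum
    intro i _
    exact (measurable_pi_apply _).const_mul _
  have hfS : ∀ x, f x = if t < c * x j + S x then (1:ℝ) else 0 := by
    intro x
    rw [hf, Fin.sum_univ_succAbove (fun k => θ k * x k) j]
  have hfupd : ∀ (x z : Fin (m + 1) → ℝ),
      f (Function.update x j (z j)) = if t < c * z j + S x then (1:ℝ) else 0 := by
    intro x z
    rw [hf, Fin.sum_univ_succAbove (fun k => θ k * Function.update x j (z j) k) j,
      Function.update_self]
    have hrest : ∑ i : Fin m, θ (j.succAbove i) * Function.update x j (z j) (j.succAbove i)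
        = S x := by
      refine Finset.sum_congr rfl fun i _ => ?_
      rw [Function.update_of_ne (Fin.succAbove_ne j i)]
    rw [hrest, ← hc]
  set P2 := (stdGaussian (m + 1)).prod (stdGaussian (m + 1)) with hP2
  set I : (Fin (m + 1) → ℝ) × (Fin (m + 1) → ℝ) → ℝ :=
    fun p => (f p.1 - f (Function.update p.1 j (p.2 j))) ^ 2 with hI
  have hsobol : sobolTau (m + 1) f j = (1/2) * ∫ p, I p ∂P2 := rfl
  have hIeq : ∀ p : (Fin (m + 1) → ℝ) × (Fin (m + 1) → ℝ),
      I p = ((if t < c * p.1 j + S p.1 then (1:ℝ) else 0)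
      - (if t < c * p.2 j + S p.1 then (1:ℝ) else 0)) ^ 2 := by
    intro p
    rw [hI]
    dsimp only
    rw [hfS, hfupd]
  have h1m : Measurable fun p : (Fin (m+1) → ℝ) × (Fin (m+1) → ℝ) => c * p.1 j + S p.1 :=
    (((measurable_pi_apply j).comp measurable_fst).const_mul c).add (hSm.comp measurable_fst)
  have h2m : Measurable fun p : (Fin (m+1) → ℝ) × (Fin (m+1) → ℝ) => c * p.2 j + S p.1 := by
    fun_prop
  have hIm : Measurable I := by
    have hIfun : I = fun p => ((if t < c * p.1 j + S p.1 then (1:ℝ) else 0)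
        - (if t < c * p.2 j + S p.1 then (1:ℝ) else 0)) ^ 2 := funext hIeq
    rw [hIfun]
    exact ((Measurable.ite (measurableSet_lt measurable_const h1m) measurable_const
      measurable_const).sub
      (Measurable.ite (measurableSet_lt measurable_const h2m) measurable_const
      measurable_const)).pow_const 2
  have hIbd : ∀ p, ‖I p‖ ≤ 1 := by
    intro p
    rw [hIeq p, Real.norm_eq_abs]
    split_ifs <;> norm_num
  have hIint : Integrable I P2 :=
    ⟨hIm.aestronglyMeasurable, HasFiniteIntegral.of_bounded (C := 1) (Eventually.of_forall hIbd)⟩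
  rcases le_or_gt (π / 4) (c ^ 2) with hbig | hsmall
  · -- big coefficient: crude bound 1/2
    have hIle : ∫ p, I p ∂P2 ≤ 1 := by
      have hmono : ∫ p, I p ∂P2 ≤ ∫ _p, (1:ℝ) ∂P2 := by
        refine integral_mono hIint (integrable_const 1) fun p => ?_
        have := hIbd p
        rw [Real.norm_eq_abs, abs_le] at this
        exact this.2
      rwa [integral_const, probReal_univ, one_smul] at hmono
    have h12 : sobolTau (m + 1) f j ≤ 1 / 2 := by
      rw [hsobol]
      linarith
    refine h12.trans ?_
    have hcge : Real.sqrt π / 2 ≤ |c| := by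
      have h1 : Real.sqrt (π / 4) ≤ Real.sqrt (c ^ 2) := Real.sqrt_le_sqrt hbig
      rw [Real.sqrt_sq_eq_abs] at h1
      have h4 : Real.sqrt (4:ℝ) = 2 := by
        rw [show (4:ℝ) = 2 ^ 2 by norm_num, Real.sqrt_sq (by norm_num)]
      rw [Real.sqrt_div pi_pos.le, h4] at h1
      exact h1
    rw [le_div_iff₀ hsπ]
    linarith
  · -- small coefficient: anti-concentration
    have hπub : π < 3.15 := pi_lt_d2
    have hπlb : 3.14 < π := by linarith [pi_gt_d6]
    set s2 : ℝ := 1 - c ^ 2 with hs2def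
    have hs2pos : 0 < s2 := by nlinarith
    have hsumsq : ∑ i, θ (j.succAbove i) ^ 2 = s2 := by
      have h := hθ
      rw [Fin.sum_univ_succAbove (fun k => θ k ^ 2) j] at h
      rw [hs2def, hc]
      linarith
    set K := Real.sqrt (2 * π * s2) with hK
    have hK1 : 1 ≤ K := by
      rw [hK, show (1:ℝ) = Real.sqrt 1 from (Real.sqrt_one).symm]
      exact Real.sqrt_le_sqrt (by nlinarith)
    have hKpos : 0 < K := lt_of_lt_of_le one_pos hK1
    set E : Set ((Fin (m+1) → ℝ) × (Fin (m+1) → ℝ)) :=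
      {p | S p.1 ∈ Set.Icc (t - max (c * p.1 j) (c * p.2 j))
        (t - min (c * p.1 j) (c * p.2 j))} with hE
    have hmaxm : Measurable fun p : (Fin (m+1) → ℝ) × (Fin (m+1) → ℝ) =>
        t - max (c * p.1 j) (c * p.2 j) := by
      fun_prop
    have hminm : Measurable fun p : (Fin (m+1) → ℝ) × (Fin (m+1) → ℝ) =>
        t - min (c * p.1 j) (c * p.2 j) := by
      fun_prop
    have hSfst : Measurable fun p : (Fin (m+1) → ℝ) × (Fin (m+1) → ℝ) => S p.1 :=
      hSm.comp measurable_fst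
    have hEm : MeasurableSet E := by
      have hEeq : E = {p : (Fin (m+1) → ℝ) × (Fin (m+1) → ℝ) |
          t - max (c * p.1 j) (c * p.2 j) ≤ S p.1}
          ∩ {p | S p.1 ≤ t - min (c * p.1 j) (c * p.2 j)} := by
        ext p
        simp [hE, Set.mem_Icc]
      rw [hEeq]
      exact (measurableSet_le hmaxm hSfst).inter (measurableSet_le hSfst hminm)
    have hpt : ∀ p, I p ≤ E.indicator (fun _ => (1:ℝ)) p := by
      intro p
      rw [hIeq p]
      by_cases hmem : p ∈ E
      · rw [Set.indicator_of_mem hmem]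
        split_ifs <;> norm_num
      · rw [Set.indicator_of_notMem hmem]
        have hmem' : ¬ (t - max (c * p.1 j) (c * p.2 j) ≤ S p.1 ∧
            S p.1 ≤ t - min (c * p.1 j) (c * p.2 j)) := by
          intro hcontra
          exact hmem (Set.mem_Icc.2 hcontra)
        split_ifs with h1 h2 h2
        · norm_num
        · exfalso
          apply hmem'
          rw [not_lt] at h2
          constructor
          · linarith [le_max_left (c * p.1 j) (c * p.2 j)]
          · linarith [min_le_right (c * p.1 j) (c * p.2 j)]
        · exfalso
          apply hmem'
          rw [not_lt] at h1
          constructor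
          · linarith [le_max_right (c * p.1 j) (c * p.2 j)]
          · linarith [min_le_left (c * p.1 j) (c * p.2 j)]
        · norm_num
    have hmeas_le : sobolTau (m+1) f j ≤ (1/2) * (P2 E).toReal := by
      rw [hsobol]
      have hind : Integrable (E.indicator fun _ => (1:ℝ)) P2 := (integrable_const 1).indicator hEm
      have hmono := integral_mono hIint hind hpt
      rw [integral_indicator_const (1:ℝ) hEm, smul_eq_mul, mul_one, measureReal_def] at hmono
      linarith
    -- set up the product decomposition
    set ψ := MeasurableEquiv.piFinSuccAbove (fun _ : Fin (m+1) => ℝ) j with hψ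
    have mp : MeasurePreserving ψ (stdGaussian (m+1)) (γ1.prod (stdGaussian m)) :=
      measurePreserving_piFinSuccAbove (fun _ : Fin (m+1) => γ1) j
    set S' : (Fin m → ℝ) → ℝ := fun y => ∑ i, θ (j.succAbove i) * y i with hS'
    have hS'm : Measurable S' := by
      apply Finset.measurable_sum
      intro i _
      exact (measurable_pi_apply _).const_mul _
    have hS'law : Measure.map S' (stdGaussian m) = gaussianReal 0 s2.toNNReal := by
      rw [hS', map_sum_gauss m (fun i => θ (j.succAbove i)), hsumsq]
    have hv0 : s2.toNNReal ≠ 0 := (Real.toNNReal_pos.2 hs2pos).ne'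
    have hSψ : ∀ (u : ℝ) (y : Fin m → ℝ), S (ψ.symm (u, y)) = S' y := by
      intro u y
      rw [hS, hS']
      refine Finset.sum_congr rfl fun i _ => ?_
      congr 1
      rw [show ψ.symm (u, y) = Fin.insertNth (α := fun _ => ℝ) j u y from rfl]
      exact Fin.insertNth_apply_succAbove (α := fun _ => ℝ) j u y i
    have hjψ : ∀ (u : ℝ) (y : Fin m → ℝ), (ψ.symm (u, y)) j = u := by
      intro u y
      rw [show ψ.symm (u, y) = Fin.insertNth (α := fun _ => ℝ) j u y from rfl]
      exact Fin.insertNth_apply_same (α := fun _ => ℝ) j u y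
    have hprod : Measure.map (Prod.map ψ.symm id)
        ((γ1.prod (stdGaussian m)).prod (stdGaussian (m+1))) = P2 := by
      rw [← Measure.map_prod_map _ _ ψ.symm.measurable measurable_id,
        (MeasurePreserving.symm ψ mp).map_eq, Measure.map_id]
    have hP2E : P2 E = ((γ1.prod (stdGaussian m)).prod (stdGaussian (m+1)))
        ((Prod.map ψ.symm id) ⁻¹' E) := by
      rw [← hprod, Measure.map_apply (ψ.symm.measurable.prodMap measurable_id) hEm]
    set E' : Set ((ℝ × (Fin m → ℝ)) × (Fin (m+1) → ℝ)) :=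
      {q | S' q.1.2 ∈ Set.Icc (t - max (c * q.1.1) (c * q.2 j))
        (t - min (c * q.1.1) (c * q.2 j))} with hE'
    have hpre : (Prod.map ψ.symm id) ⁻¹' E = E' := by
      ext ⟨⟨u, y⟩, z⟩
      simp only [hE, hE', Set.mem_preimage, Prod.map_apply, id_eq, Set.mem_setOf_eq]
      rw [hSψ u y, hjψ u y]
    have hE'm : MeasurableSet E' := by
      have h1 : Measurable fun q : (ℝ × (Fin m → ℝ)) × (Fin (m+1) → ℝ) => S' q.1.2 :=
        hS'm.comp (measurable_fst.snd)
      have h2 : Measurable fun q : (ℝ × (Fin m → ℝ)) × (Fin (m+1) → ℝ) =>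
          t - max (c * q.1.1) (c * q.2 j) := by
        fun_prop
      have h3 : Measurable fun q : (ℝ × (Fin m → ℝ)) × (Fin (m+1) → ℝ) =>
          t - min (c * q.1.1) (c * q.2 j) := by
        fun_prop
      have hE'eq : E' = {q : (ℝ × (Fin m → ℝ)) × (Fin (m+1) → ℝ) |
          t - max (c * q.1.1) (c * q.2 j) ≤ S' q.1.2}
          ∩ {q | S' q.1.2 ≤ t - min (c * q.1.1) (c * q.2 j)} := by
        ext q
        simp [hE', Set.mem_Icc]
      rw [hE'eq]
      exact (measurableSet_le h2 h1).inter (measurableSet_le h1 h3)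
    -- the inner anti-concentration estimate
    have hinner : ∀ u w : ℝ,
        (stdGaussian m) {y : Fin m → ℝ | S' y ∈ Set.Icc (t - max (c * u) (c * w))
          (t - min (c * u) (c * w))}
          ≤ ENNReal.ofReal (K⁻¹ * (|c| * |u - w|)) := by
      intro u w
      have hset : {y : Fin m → ℝ | S' y ∈ Set.Icc (t - max (c * u) (c * w))
          (t - min (c * u) (c * w))}
          = S' ⁻¹' (Set.Icc (t - max (c * u) (c * w)) (t - min (c * u) (c * w))) := rfl
      rw [hset, ← Measure.map_apply hS'm measurableSet_Icc, hS'law]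
      refine (gauss_Icc_le hv0 _ _).trans (ENNReal.ofReal_le_ofReal ?_)
      have hcoe : ((s2.toNNReal : ℝ)) = s2 := Real.coe_toNNReal _ hs2pos.le
      have hlen : (t - min (c * u) (c * w)) - (t - max (c * u) (c * w)) = |c| * |u - w| := by
        have h1 : max (c * u) (c * w) - min (c * u) (c * w) = |c * w - c * u| :=
          max_sub_min_eq_abs _ _
        calc (t - min (c * u) (c * w)) - (t - max (c * u) (c * w))
            = max (c * u) (c * w) - min (c * u) (c * w) := by ring
          _ = |c * w - c * u| := h1
          _ = |c| * |u - w| := by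
              rw [show c * w - c * u = c * (w - u) by ring, abs_mul, abs_sub_comm]
      rw [hlen, hcoe]
      rw [hK]
      ring_nf
      exact le_refl _
    -- Fubini chain
    have heval : Measure.map (fun z : Fin (m+1) → ℝ => z j) (stdGaussian (m+1)) = γ1 := by
      have hcompe : (fun z : Fin (m+1) → ℝ => z j) = Prod.fst ∘ ψ := rfl
      rw [hcompe, ← Measure.map_map measurable_fst ψ.measurable, mp.map_eq,
        Measure.map_fst_prod]
      simp
    have habsm : ∀ w : ℝ, Measurable fun u : ℝ => ENNReal.ofReal |u - w| :=
      fun w => ((measurable_id.sub measurable_const).abs).ennreal_ofReal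
    set H : ℝ → ENNReal := fun w => ∫⁻ u, ENNReal.ofReal |u - w| ∂γ1 with hH
    have hHm : Measurable H := by
      rw [hH]
      exact Measurable.lintegral_prod_right'
        (f := fun q : ℝ × ℝ => ENNReal.ofReal |q.2 - q.1|)
        ((measurable_snd.sub measurable_fst).abs.ennreal_ofReal)
    have hofnn : (0:ℝ) ≤ K⁻¹ * |c| := by positivity
    have hmoment : ∫⁻ w, H w ∂γ1 = ENNReal.ofReal (2 / Real.sqrt π) := by
      rw [hH]
      rw [lintegral_lintegral (f := fun w u => ENNReal.ofReal |u - w|)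
        (by exact ((measurable_snd.sub measurable_fst).abs.ennreal_ofReal).aemeasurable)]
      have hgm : Measurable (fun p : ℝ × ℝ => (-1:ℝ) * p.1 + 1 * p.2) :=
        (measurable_fst.const_mul _).add (measurable_snd.const_mul _)
      have hmap := lintegral_map (μ := γ1.prod γ1) (f := fun y : ℝ => ENNReal.ofReal |y|)
        (g := fun p : ℝ × ℝ => (-1:ℝ) * p.1 + 1 * p.2)
        (by exact measurable_id.abs.ennreal_ofReal) hgm
      have h2nn : (((-1:ℝ)) ^ 2 + (1:ℝ) ^ 2).toNNReal = (2:NNReal) := by norm_num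
      beta_reduce at hmap
      rw [map_lin2 (-1) 1, h2nn, lintegral_abs_gauss2] at hmap
      have hcongr2 : ∫⁻ z : ℝ × ℝ, ENNReal.ofReal |z.2 - z.1| ∂(γ1.prod γ1)
          = ∫⁻ a : ℝ × ℝ, ENNReal.ofReal |(-1:ℝ) * a.1 + 1 * a.2| ∂(γ1.prod γ1) :=
        lintegral_congr fun p => by rw [show (-1:ℝ) * p.1 + 1 * p.2 = p.2 - p.1 by ring]
      rw [hcongr2, ← hmap]
    have hslicemeas : ∀ z : Fin (m+1) → ℝ, MeasurableSet {p : ℝ × (Fin m → ℝ) |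
        S' p.2 ∈ Set.Icc (t - max (c * p.1) (c * z j)) (t - min (c * p.1) (c * z j))} := by
      intro z
      have h1 : Measurable fun p : ℝ × (Fin m → ℝ) => S' p.2 := hS'm.comp measurable_snd
      have h2 : Measurable fun p : ℝ × (Fin m → ℝ) => t - max (c * p.1) (c * z j) :=
        measurable_const.sub ((measurable_fst.const_mul c).max measurable_const)
      have h3 : Measurable fun p : ℝ × (Fin m → ℝ) => t - min (c * p.1) (c * z j) :=
        measurable_const.sub ((measurable_fst.const_mul c).min measurable_const)
      have heq2 : {p : ℝ × (Fin m → ℝ) |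
          S' p.2 ∈ Set.Icc (t - max (c * p.1) (c * z j)) (t - min (c * p.1) (c * z j))}
          = {p : ℝ × (Fin m → ℝ) | t - max (c * p.1) (c * z j) ≤ S' p.2}
          ∩ {p | S' p.2 ≤ t - min (c * p.1) (c * z j)} := by
        ext p
        simp only [Set.mem_setOf_eq, Set.mem_inter_iff, Set.mem_Icc]
      rw [heq2]
      exact (measurableSet_le h2 h1).inter (measurableSet_le h1 h3)
    have hmainE : ((γ1.prod (stdGaussian m)).prod (stdGaussian (m+1))) E'
        ≤ ENNReal.ofReal (K⁻¹ * |c|) * ENNReal.ofReal (2 / Real.sqrt π) := by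
      rw [Measure.prod_apply_symm hE'm]
      have hstep1 : ∀ z : Fin (m+1) → ℝ,
          (γ1.prod (stdGaussian m)) ((fun p => (p, z)) ⁻¹' E')
          ≤ ENNReal.ofReal (K⁻¹ * |c|) * H (z j) := by
        intro z
        have hpre2 : (fun p : ℝ × (Fin m → ℝ) => (p, z)) ⁻¹' E' = {p : ℝ × (Fin m → ℝ) |
            S' p.2 ∈ Set.Icc (t - max (c * p.1) (c * z j)) (t - min (c * p.1) (c * z j))} := rfl
        rw [hpre2, Measure.prod_apply (hslicemeas z)]
        calc ∫⁻ u, (stdGaussian m) (Prod.mk u ⁻¹' {p : ℝ × (Fin m → ℝ) |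
              S' p.2 ∈ Set.Icc (t - max (c * p.1) (c * z j))
                (t - min (c * p.1) (c * z j))}) ∂γ1
            ≤ ∫⁻ u, ENNReal.ofReal (K⁻¹ * (|c| * |u - z j|)) ∂γ1 := by
              refine lintegral_mono fun u => ?_
              exact hinner u (z j)
          _ = ∫⁻ u, ENNReal.ofReal (K⁻¹ * |c|) * ENNReal.ofReal |u - z j| ∂γ1 := by
              refine lintegral_congr fun u => ?_
              rw [← ENNReal.ofReal_mul hofnn, mul_assoc]
          _ = ENNReal.ofReal (K⁻¹ * |c|) * H (z j) := lintegral_const_mul _ (habsm (z j))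
      calc ∫⁻ z, (γ1.prod (stdGaussian m)) ((fun p => (p, z)) ⁻¹' E') ∂(stdGaussian (m+1))
          ≤ ∫⁻ z, ENNReal.ofReal (K⁻¹ * |c|) * H (z j) ∂(stdGaussian (m+1)) :=
            lintegral_mono hstep1
        _ = ENNReal.ofReal (K⁻¹ * |c|) * ∫⁻ z, H (z j) ∂(stdGaussian (m+1)) :=
            lintegral_const_mul _ (hHm.comp (measurable_pi_apply j))
        _ = ENNReal.ofReal (K⁻¹ * |c|) * ∫⁻ w, H w ∂γ1 := by
            rw [← heval, lintegral_map hHm (measurable_pi_apply j)]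
        _ = ENNReal.ofReal (K⁻¹ * |c|) * ENNReal.ofReal (2 / Real.sqrt π) := by
            rw [hmoment]
    have hEbound : P2 E ≤ ENNReal.ofReal (K⁻¹ * |c| * (2 / Real.sqrt π)) := by
      rw [hP2E, hpre]
      refine hmainE.trans (le_of_eq ?_)
      rw [← ENNReal.ofReal_mul hofnn]
    have htoReal : (P2 E).toReal ≤ K⁻¹ * |c| * (2 / Real.sqrt π) :=
      ENNReal.toReal_le_of_le_ofReal (by positivity) hEbound
    refine hmeas_le.trans ?_
    have hstep : (1/2) * (P2 E).toReal ≤ (1/2) * (K⁻¹ * |c| * (2 / Real.sqrt π)) := by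
      linarith
    refine hstep.trans ?_
    have heq : (1/2) * (K⁻¹ * |c| * (2 / Real.sqrt π)) = K⁻¹ * (|c| / Real.sqrt π) := by
      ring
    rw [heq]
    have hKinv : K⁻¹ ≤ 1 := by
      rw [inv_le_one_iff₀]
      right
      exact hK1
    calc K⁻¹ * (|c| / Real.sqrt π) ≤ 1 * (|c| / Real.sqrt π) :=
          mul_le_mul_of_nonneg_right hKinv (by positivity)
      _ = |c| / Real.sqrt π := one_mul _

end Stmt5Aux

/-- Theorem 4.1 (upper bound for the mean dimension of a linear step function). -/
theorem stmt5 (d : ℕ) (hd : 2 ≤ d) (t : ℝ) (ht : 0 ≤ t)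
    (θ : Fin d → ℝ) (hθ : ∑ j, θ j ^ 2 = 1)
    (f : (Fin d → ℝ) → ℝ)
    (hf : ∀ x, f x = if t < ∑ j, θ j * x j then (1 : ℝ) else 0) :
    meanDim d f ≤ (∑ j, |θ j|) / (Phi t * Phi (-t) * Real.sqrt (2 * π))
      * (Real.sqrt 2 + 2 * Real.sqrt (Real.log ((d : ℝ) / ∑ j, |θ j|))) := by
  obtain ⟨m, rfl⟩ : ∃ m, d = m + 1 := ⟨d - 1, by omega⟩
  have hτ : ∀ j : Fin (m+1), sobolTau (m+1) f j ≤ |θ j| / Real.sqrt π :=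
    fun j => Stmt5Aux.tau_le t θ hθ f hf j
  have hvar := Stmt5Aux.variance_eq (m+1) t θ hθ f hf
  have hPt : 0 < Phi t := Stmt5Aux.Phi_pos t
  have hPmt : 0 < Phi (-t) := Stmt5Aux.Phi_pos (-t)
  have hsπ : 0 < Real.sqrt π := Real.sqrt_pos.2 pi_pos
  have hτsum : ∑ j, sobolTau (m+1) f j ≤ (∑ j, |θ j|) / Real.sqrt π := by
    rw [Finset.sum_div]
    exact Finset.sum_le_sum fun j _ => hτ j
  have hP : 0 < Phi t * Phi (-t) := mul_pos hPt hPmt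
  have hAnn : (0:ℝ) ≤ ∑ j : Fin (m+1), |θ j| := Finset.sum_nonneg fun j _ => abs_nonneg _
  unfold meanDim
  rw [hvar]
  calc (∑ j, sobolTau (m+1) f j) / (Phi t * Phi (-t))
      ≤ ((∑ j : Fin (m+1), |θ j|) / Real.sqrt π) / (Phi t * Phi (-t)) := by
        gcongr
    _ ≤ (∑ j : Fin (m+1), |θ j|) / (Phi t * Phi (-t) * Real.sqrt (2 * π))
        * (Real.sqrt 2 + 2 * Real.sqrt (Real.log ((↑(m+1) : ℝ) / ∑ j : Fin (m+1), |θ j|))) := by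
        have hsqrt2π : Real.sqrt (2*π) = Real.sqrt 2 * Real.sqrt π :=
          Real.sqrt_mul (by norm_num) _
        have heq : ((∑ j : Fin (m+1), |θ j|) / Real.sqrt π) / (Phi t * Phi (-t))
            = (∑ j : Fin (m+1), |θ j|) / (Phi t * Phi (-t) * Real.sqrt (2*π)) * Real.sqrt 2 := by
          rw [hsqrt2π]
          field_simp
        rw [heq]
        refine mul_le_mul_of_nonneg_left ?_ (by positivity)
        have := Real.sqrt_nonneg (Real.log ((↑(m+1) : ℝ) / ∑ j : Fin (m+1), |θ j|))
        linarith

end
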